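/- Fix an integer S ≥ 1. Let a : ℕ → ℝ with a_i ≥ 0 and Σ_{i=0}^{∞} a_i = 1, extended by a_k = 0 for k < 0, and let q : ℕ → ℝ with q_i ≥ 0 and Σ_{i=0}^{∞} q_i = 1 satisfy the balance equations q_j = a_j·(Σ_{i=0}^{S} q_i) + Σ_{i=S+1}^{∞} q_i·a_{j−i+S} for all j ∈ ℕ. Assume furthermore that the sequences (i·a_i) and (i·q_i) are summable. Then Σ_{i=0}^{S−1} (S − i)·q_i = S − Σ_{i=0}^{∞} i·a_i; that is, N(1) = S − E[A] = S(1 − ρ) where ρ = E[A]/S. -/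

import Mathlib

/-- Extension of a sequence on ℕ to ℤ by zero on negative integers. -/
def aext (a : ℕ → ℝ) : ℤ → ℝ := fun k => if 0 ≤ k then a k.toNat else 0

lemma aext_nonneg (a : ℕ → ℝ) (ha : ∀ i, 0 ≤ a i) (z : ℤ) : 0 ≤ aext a z := by
  unfold aext; split
  · exact ha _
  · exact le_refl 0

/-- Inner sum computation: for i ≥ S+1,
  ∑' j, j * (c * aext a (j - i + S)) = c * (EA + i - S). -/
lemma inner_hasSum (S i : ℕ) (hSi : S + 1 ≤ i)
    (a : ℕ → ℝ) (ha_sum : HasSum a 1)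
    (ha_mean : Summable (fun k : ℕ => (k : ℝ) * a k)) (c : ℝ) :
    HasSum (fun j : ℕ => (j : ℝ) * (c * aext a ((j : ℤ) - (i : ℤ) + (S : ℤ))))
      (c * ((∑' k : ℕ, (k : ℝ) * a k) + (i : ℝ) - (S : ℝ))) := by
  set d : ℕ := i - S with hd
  have hid : i = S + d := by omega
  set f : ℕ → ℝ := fun j => (j : ℝ) * (c * aext a ((j : ℤ) - (i : ℤ) + (S : ℤ))) with hf
  have hshift : ∀ k : ℕ, f (k + d) = ((k : ℝ) + (d : ℝ)) * (c * a k) := by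
    intro k
    have h1 : ((k + d : ℕ) : ℤ) - (i : ℤ) + (S : ℤ) = (k : ℤ) := by
      push_cast; omega
    simp only [hf, h1]
    unfold aext
    rw [if_pos (Int.ofNat_nonneg k)]
    simp only [Int.toNat_natCast]
    push_cast
    ring
  have hsum1 : HasSum (fun k : ℕ => ((k : ℝ) + (d : ℝ)) * (c * a k))
      (c * ((∑' k : ℕ, (k : ℝ) * a k) + (d : ℝ))) := by
    have h1 : HasSum (fun k : ℕ => c * ((k : ℝ) * a k)) (c * (∑' k : ℕ, (k : ℝ) * a k)) :=
      ha_mean.hasSum.mul_left c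
    have h2 : HasSum (fun k : ℕ => (c * (d : ℝ)) * a k) (c * (d : ℝ) * 1) :=
      ha_sum.mul_left _
    have heq : (fun k : ℕ => ((k : ℝ) + (d : ℝ)) * (c * a k)) =
        fun k : ℕ => c * ((k : ℝ) * a k) + (c * (d : ℝ)) * a k := by
      funext k; ring
    have hval : c * ((∑' k : ℕ, (k : ℝ) * a k) + (d : ℝ)) =
        c * (∑' k : ℕ, (k : ℝ) * a k) + c * (d : ℝ) * 1 := by ring
    rw [heq, hval]
    exact h1.add h2
  have hzero : ∀ j ∈ Finset.range d, f j = 0 := by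
    intro j hj
    simp only [Finset.mem_range] at hj
    have hneg : ¬ (0 : ℤ) ≤ (j : ℤ) - (i : ℤ) + (S : ℤ) := by omega
    simp only [hf]
    unfold aext
    rw [if_neg hneg, mul_zero, mul_zero]
  have hsum2 : HasSum (fun k : ℕ => f (k + d))
      (c * ((∑' k : ℕ, (k : ℝ) * a k) + (d : ℝ))) := by
    convert hsum1 using 1
    exact funext hshift
  have := (hasSum_nat_add_iff (f := f) d).mp hsum2
  rw [Finset.sum_eq_zero hzero, add_zero] at this
  convert this using 2
  case e'_3 => exact rfl
  have : (d : ℝ) = (i : ℝ) - (S : ℝ) := by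
    rw [hid]; push_cast; ring
  rw [this]; ring

set_option maxHeartbeats 1000000 in
/-- If q is a stationary distribution of the queue recursion and the means
exist, then N(1) = Σ_{i=0}^{S−1} (S − i) q_i = S − E[A]. -/
theorem N_one_eq_S_sub_mean
    (S : ℕ) (hS : 1 ≤ S)
    (a : ℕ → ℝ) (ha_nonneg : ∀ i, 0 ≤ a i) (ha_sum : HasSum a 1)
    (q : ℕ → ℝ) (hq_nonneg : ∀ i, 0 ≤ q i) (hq_sum : HasSum q 1)
    (h_balance : ∀ j : ℕ,
      q j = a j * (∑ i ∈ Finset.range (S + 1), q i) +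
        ∑' i : ℕ, if S + 1 ≤ i then q i * aext a ((j : ℤ) - (i : ℤ) + (S : ℤ)) else 0)
    (ha_mean : Summable (fun i : ℕ => (i : ℝ) * a i))
    (hq_mean : Summable (fun i : ℕ => (i : ℝ) * q i)) :
    ∑ i ∈ Finset.range S, ((S : ℝ) - (i : ℝ)) * q i = (S : ℝ) - ∑' i : ℕ, (i : ℝ) * a i := by
  classical
  set EA : ℝ := ∑' i : ℕ, (i : ℝ) * a i with hEA
  set EQ : ℝ := ∑' i : ℕ, (i : ℝ) * q i with hEQ
  set T : ℝ := ∑ i ∈ Finset.range (S + 1), q i with hT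
  -- the double-sum kernel
  set G : ℕ → ℕ → ℝ := fun i j =>
    (j : ℝ) * (if S + 1 ≤ i then q i * aext a ((j : ℤ) - (i : ℤ) + (S : ℤ)) else 0) with hG
  have hG_nonneg : ∀ i j, 0 ≤ G i j := by
    intro i j
    apply mul_nonneg (Nat.cast_nonneg j)
    split
    · exact mul_nonneg (hq_nonneg i) (aext_nonneg a ha_nonneg _)
    · exact le_refl 0
  have hG_hasSum : ∀ i : ℕ, HasSum (G i)
      (if S + 1 ≤ i then q i * (EA + (i : ℝ) - (S : ℝ)) else 0) := by
    intro i
    by_cases h : S + 1 ≤ i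
    · simp only [hG, if_pos h]
      exact inner_hasSum S i h a ha_sum ha_mean (q i)
    · simp only [hG, if_neg h, mul_zero]
      exact hasSum_zero
  -- the row-sums function and its summability
  set g : ℕ → ℝ := fun i => if S + 1 ≤ i then q i * (EA + (i : ℝ) - (S : ℝ)) else 0 with hg
  set hfun : ℕ → ℝ := fun i => q i * EA + ((i : ℝ) * q i - (S : ℝ) * q i) with hh
  have hhfun_summable : Summable hfun := by
    apply Summable.add (hq_sum.summable.mul_right EA)
    exact hq_mean.sub (hq_sum.summable.mul_left (S : ℝ))
  have hg_eq : g = Set.indicator {i : ℕ | S + 1 ≤ i} hfun := by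
    funext i
    simp only [hg, hh, Set.indicator, Set.mem_setOf_eq]
    split
    · ring
    · rfl
  have hg_summable : Summable g := by
    rw [hg_eq]; exact hhfun_summable.indicator _
  -- summability of the double family
  have hF_summable : Summable (fun p : ℕ × ℕ => G p.1 p.2) := by
    rw [summable_prod_of_nonneg (fun p => hG_nonneg p.1 p.2)]
    constructor
    · intro i; exact (hG_hasSum i).summable
    · have : (fun i => ∑' j, G i j) = g := by
        funext i; exact (hG_hasSum i).tsum_eq
      rw [this]; exact hg_summable
  have hFswap : Summable (fun p : ℕ × ℕ => G p.2 p.1) := hF_summable.prod_symm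
  have hpair := (summable_prod_of_nonneg
    (f := fun p : ℕ × ℕ => G p.2 p.1) (fun p => hG_nonneg p.2 p.1)).mp hFswap
  have hcol_summable : ∀ j : ℕ, Summable (fun i => G i j) := hpair.1
  have hcolsum_summable : Summable (fun j => ∑' i, G i j) := hpair.2
  -- swap the order of summation
  have hswap : ∑' (j : ℕ) (i : ℕ), G i j = ∑' (i : ℕ) (j : ℕ), G i j :=
    Summable.tsum_comm' hF_summable (fun i => (hG_hasSum i).summable) hcol_summable
  -- multiply balance by j and sum
  have hrow : ∀ j : ℕ, (j : ℝ) * q j = (j : ℝ) * a j * T + ∑' i : ℕ, G i j := by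
    intro j
    have hb := h_balance j
    calc (j : ℝ) * q j = (j : ℝ) * (a j * T +
        ∑' i : ℕ, if S + 1 ≤ i then q i * aext a ((j : ℤ) - (i : ℤ) + (S : ℤ)) else 0) := by
          rw [← hb]
      _ = (j : ℝ) * a j * T + (j : ℝ) *
          ∑' i : ℕ, (if S + 1 ≤ i then q i * aext a ((j : ℤ) - (i : ℤ) + (S : ℤ)) else 0) := by
          ring
      _ = (j : ℝ) * a j * T + ∑' i : ℕ, G i j := by
          rw [← tsum_mul_left]
  have hEQ_eq : EQ = EA * T + ∑' (i : ℕ) (j : ℕ), G i j := by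
    have h1 : HasSum (fun j : ℕ => (j : ℝ) * a j * T) (EA * T) :=
      ha_mean.hasSum.mul_right T
    have h2 : EQ = ∑' j : ℕ, ((j : ℝ) * a j * T + ∑' i : ℕ, G i j) := by
      rw [hEQ]
      congr 1
      funext j
      exact hrow j
    rw [h2, Summable.tsum_add h1.summable hcolsum_summable, h1.tsum_eq, ← hswap]
  -- compute ∑' i ∑' j G i j = ∑' g
  have hsum_g : ∑' (i : ℕ) (j : ℕ), G i j = ∑' i, g i := by
    congr 1
    funext i
    exact (hG_hasSum i).tsum_eq
  -- ∑' g = ∑' hfun - ∑_{range (S+1)} hfun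
  have htsum_g : ∑' i, g i = (∑' i, hfun i) - ∑ i ∈ Finset.range (S + 1), hfun i := by
    have e1 : ∑ i ∈ Finset.range (S + 1), g i + ∑' k, g (k + (S + 1)) = ∑' i, g i :=
      Summable.sum_add_tsum_nat_add (S + 1) hg_summable
    have e2 : ∑ i ∈ Finset.range (S + 1), hfun i + ∑' k, hfun (k + (S + 1)) = ∑' i, hfun i :=
      Summable.sum_add_tsum_nat_add (S + 1) hhfun_summable
    have e3 : ∑ i ∈ Finset.range (S + 1), g i = 0 := by
      apply Finset.sum_eq_zero
      intro i hi
      simp only [Finset.mem_range] at hi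
      simp only [hg, if_neg (by omega : ¬ S + 1 ≤ i)]
    have e4 : ∀ k : ℕ, g (k + (S + 1)) = hfun (k + (S + 1)) := by
      intro k
      simp only [hg, hh, if_pos (by omega : S + 1 ≤ k + (S + 1))]
      ring
    rw [e3, zero_add] at e1
    rw [← e1]
    have : ∑' k, g (k + (S + 1)) = ∑' k, hfun (k + (S + 1)) := by
      congr 1; funext k; exact e4 k
    rw [this]; linarith [e2]
  -- ∑' hfun = EA + EQ - S
  have htsum_hfun : ∑' i, hfun i = EA + EQ - (S : ℝ) := by
    have h1 : HasSum (fun i : ℕ => q i * EA) (1 * EA) := hq_sum.mul_right EA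
    have h2 : HasSum (fun i : ℕ => (i : ℝ) * q i - (S : ℝ) * q i) (EQ - (S : ℝ) * 1) :=
      hq_mean.hasSum.sub (hq_sum.mul_left (S : ℝ))
    have h3 := h1.add h2
    have : (∑' i, hfun i) = 1 * EA + (EQ - (S : ℝ) * 1) := h3.tsum_eq
    rw [this]; ring
  -- finite part of hfun
  have hfin : ∑ i ∈ Finset.range (S + 1), hfun i =
      EA * T - ∑ i ∈ Finset.range S, ((S : ℝ) - (i : ℝ)) * q i := by
    have h1 : ∑ i ∈ Finset.range (S + 1), hfun i =
        (∑ i ∈ Finset.range (S + 1), q i) * EA -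
        ∑ i ∈ Finset.range (S + 1), ((S : ℝ) - (i : ℝ)) * q i := by
      rw [Finset.sum_mul, ← Finset.sum_sub_distrib]
      apply Finset.sum_congr rfl
      intro i _
      simp only [hh]; ring
    rw [h1, ← hT]
    have h2 : ∑ i ∈ Finset.range (S + 1), ((S : ℝ) - (i : ℝ)) * q i =
        ∑ i ∈ Finset.range S, ((S : ℝ) - (i : ℝ)) * q i := by
      rw [Finset.sum_range_succ]
      simp
    rw [h2]; ring
  -- put it together
  have key : ∑' (i : ℕ) (j : ℕ), G i j = (EA + EQ - (S : ℝ)) -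
      (EA * T - ∑ i ∈ Finset.range S, ((S : ℝ) - (i : ℝ)) * q i) := by
    rw [hsum_g, htsum_g, htsum_hfun, hfin]
  rw [key] at hEQ_eq
  linarith [hEQ_eq]
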